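/- arXiv:1512.01760 — 3 statements merged into one kernel-verified Lean document; each statement's English description precedes it below -/
import Mathlib

section
/- Let φ(z) = (i t / 2)·(z − z⁻¹)² − n·log z for parameters t > 0 and n ∈ ℝ with |n| < 2t. Then the critical points of φ on the unit circle (i.e., points where φ'(z) = 0) are exactly the four points S₁ = e^{−πi/4}·A, S₂ = e^{−πi/4}·Ā, S₃ = −S₁, S₄ = −S₂, where A = (1/2)·(√(2 + n/t) − i·√(2 − n/t)). -/
theorem stmt7 (t n : ℝ) (ht : 0 < t) (hn : |n| < 2 * t)
    (A S1 S2 S3 S4 : ℂ)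
    (hA : A = (1 / 2) * ((Real.sqrt (2 + n / t) : ℂ) - Complex.I * (Real.sqrt (2 - n / t) : ℂ)))
    (hS1 : S1 = Complex.exp (-(Real.pi : ℂ) * Complex.I / 4) * A)
    (hS2 : S2 = Complex.exp (-(Real.pi : ℂ) * Complex.I / 4) * (starRingEnd ℂ A))
    (hS3 : S3 = -S1) (hS4 : S4 = -S2) :
    ∀ z : ℂ, ‖z‖ = 1 →
      (Complex.I * t * (z - z⁻¹) * (1 + (z⁻¹) ^ 2) - n / z = 0 ↔
        z = S1 ∨ z = S2 ∨ z = S3 ∨ z = S4) := by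
  intro z hz
  have hz0 : z ≠ 0 := by
    intro h; rw [h] at hz; simp at hz
  have ht0 : (t : ℂ) ≠ 0 := by exact_mod_cast ht.ne'
  have habs := abs_lt.mp hn
  have hnt1 : (0:ℝ) ≤ 2 + n / t := by
    have : -2 < n / t := by rw [lt_div_iff₀ ht]; linarith
    linarith
  have hnt2 : (0:ℝ) ≤ 2 - n / t := by
    have : n / t < 2 := by rw [div_lt_iff₀ ht]; linarith
    linarith
  set u : ℂ := (Real.sqrt (2 + n / t) : ℂ) with hu
  set v : ℂ := (Real.sqrt (2 - n / t) : ℂ) with hv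
  have hu2 : u ^ 2 = 2 + (n : ℂ) / t := by
    rw [hu, ← Complex.ofReal_pow, Real.sq_sqrt hnt1]; push_cast; ring
  have hv2 : v ^ 2 = 2 - (n : ℂ) / t := by
    rw [hv, ← Complex.ofReal_pow, Real.sq_sqrt hnt2]; push_cast; ring
  have hu2' : u ^ 2 * t = 2 * t + n := by rw [hu2]; field_simp
  have hv2' : v ^ 2 * t = 2 * t - n := by rw [hv2]; field_simp
  have h4 : u ^ 2 + v ^ 2 = 4 := by rw [hu2, hv2]; ring
  have hC : (starRingEnd ℂ) A = (1 / 2) * (u + Complex.I * v) := by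
    rw [hA, hu, hv]
    simp only [map_mul, map_sub, map_one, map_div₀, map_ofNat, Complex.conj_I,
      Complex.conj_ofReal]
    ring
  have he2 : Complex.exp (-(Real.pi : ℂ) * Complex.I / 4) ^ 2 = -Complex.I := by
    rw [sq, ← Complex.exp_add]
    have h : (-(Real.pi : ℂ) * Complex.I / 4) + (-(Real.pi : ℂ) * Complex.I / 4)
        = (-((Real.pi : ℂ) / 2)) * Complex.I := by ring
    rw [h, Complex.exp_mul_I, Complex.cos_neg, Complex.sin_neg,
      Complex.cos_pi_div_two, Complex.sin_pi_div_two]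
    ring
  have hS1sq : S1 ^ 2 = -Complex.I * A ^ 2 := by rw [hS1, mul_pow, he2]
  have hS2sq : S2 ^ 2 = -Complex.I * ((starRingEnd ℂ) A) ^ 2 := by
    rw [hS2, mul_pow, he2]
  have hsum : (t : ℂ) * (S1 ^ 2 + S2 ^ 2) = -Complex.I * n := by
    rw [hS1sq, hS2sq, hC, hA]
    linear_combination (-Complex.I / 2) * hu2' + (-(Complex.I ^ 3) / 2) * hv2'
      + (Complex.I * n / 2 - Complex.I * t) * Complex.I_sq
  have hprod : S1 ^ 2 * S2 ^ 2 = -1 := by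
    rw [hS1sq, hS2sq, hC, hA]
    linear_combination (-(u ^ 2 + v ^ 2 + 4) / 16) * h4
      + (u ^ 4 / 16 - u ^ 2 * v ^ 2 * (Complex.I ^ 2 - 1) / 8
        + v ^ 4 * (Complex.I ^ 4 - Complex.I ^ 2 + 1) / 16) * Complex.I_sq
  have hfac : Complex.I * t * z ^ 4 - n * z ^ 2 - Complex.I * t
      = Complex.I * t * ((z - S1) * (z - S2) * (z - S3) * (z - S4)) := by
    rw [hS3, hS4]
    linear_combination (Complex.I * z ^ 2) * hsum + (-Complex.I * t) * hprod
      + (-(n : ℂ) * z ^ 2) * Complex.I_sq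
  have key : Complex.I * t * (z - z⁻¹) * (1 + (z⁻¹) ^ 2) - n / z
      = (Complex.I * t * z ^ 4 - n * z ^ 2 - Complex.I * t) / z ^ 3 := by
    field_simp
    ring
  rw [key, div_eq_zero_iff, or_iff_left (pow_ne_zero 3 hz0), hfac]
  have hIt : Complex.I * (t : ℂ) ≠ 0 := mul_ne_zero Complex.I_ne_zero ht0
  simp only [mul_eq_zero, sub_eq_zero, Complex.I_ne_zero, ht0, false_or, or_false]
  tauto
end

section
/- Let δ : ℂ \ (unit circle) → ℂ be defined by δ(z) = exp( (−1/(2πi)) · [∫_{arc(S₁S₂)} + ∫_{arc(S₃S₄)}] (τ − z)⁻¹ · log(1 + |r(τ)|²) dτ ), where r is a continuous function on the unit circle satisfying r(−τ) = −r(τ) and the arcs are symmetric with respect to the map τ ↦ −τ (i.e., S₃ = −S₁, S₄ = −S₂). Then δ(−z) = δ(z) for all z off the unit circle, and δ'(0) = 0. -/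
theorem stmt16 (r : ℂ → ℂ) (hr : Continuous r) (hodd : ∀ τ : ℂ, r (-τ) = -r τ)
    (θ₁ θ₂ : ℝ) (F : ℂ → ℂ)
    (hF : ∀ z : ℂ, F z = Complex.exp ((-1 / (2 * Real.pi * Complex.I)) *
      ((∫ θ in θ₁..θ₂, (Complex.I * Complex.exp (Complex.I * θ)) *
          ((Complex.exp (Complex.I * θ) - z)⁻¹ *
            ((Real.log (1 + ‖r (Complex.exp (Complex.I * θ))‖ ^ 2) : ℝ) : ℂ))) +
       (∫ θ in (θ₁ + Real.pi)..(θ₂ + Real.pi), (Complex.I * Complex.exp (Complex.I * θ)) *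
          ((Complex.exp (Complex.I * θ) - z)⁻¹ *
            ((Real.log (1 + ‖r (Complex.exp (Complex.I * θ))‖ ^ 2) : ℝ) : ℂ)))))) :
    (∀ z : ℂ, ‖z‖ ≠ 1 → F (-z) = F z) ∧ deriv F 0 = 0 := by
  set L : ℝ → ℂ := fun θ =>
    ((Real.log (1 + ‖r (Complex.exp (Complex.I * θ))‖ ^ 2) : ℝ) : ℂ) with hL
  set I : ℂ → ℂ := fun z => ∫ θ in θ₁..θ₂, (Complex.I * Complex.exp (Complex.I * θ)) *
      ((Complex.exp (Complex.I * θ) - z)⁻¹ * L θ) with hI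
  have hswap : ∀ z : ℂ,
      (∫ θ in (θ₁ + Real.pi)..(θ₂ + Real.pi), (Complex.I * Complex.exp (Complex.I * θ)) *
          ((Complex.exp (Complex.I * θ) - z)⁻¹ * L θ)) = I (-z) := by
    intro z
    rw [hI, ← intervalIntegral.integral_comp_add_right _ Real.pi]
    apply intervalIntegral.integral_congr
    intro θ _
    have he : Complex.exp (Complex.I * ((θ + Real.pi : ℝ) : ℂ)) =
        -Complex.exp (Complex.I * θ) := by
      push_cast
      rw [mul_add, Complex.exp_add, mul_comm Complex.I (Real.pi : ℂ),
        Complex.exp_pi_mul_I]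
      ring
    simp only [hL, he, hodd, norm_neg]
    have hz : -Complex.exp (Complex.I * θ) - z = -(Complex.exp (Complex.I * θ) - -z) := by
      ring
    rw [hz, inv_neg]
    ring
  have heven : ∀ z : ℂ, F (-z) = F z := by
    intro z
    rw [hF, hF]
    have h1 := hswap z
    have h2 := hswap (-z)
    rw [neg_neg] at h2
    simp only [← hL, ← hI] at *
    rw [h1, h2, add_comm]
  constructor
  · exact fun z _ => heven z
  · have h := deriv_comp_neg (f := F) (x := 0)
    simp only [heven, neg_zero] at h
    exact CharZero.eq_neg_self_iff.mp h
end

section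
/- With δ defined as in the δ-RHP, we have δ(z̄⁻¹) = δ(0)·conj(δ(z))⁻¹ for every z off the unit circle with z ≠ 0, where δ(0) > 0. -/
open Complex intervalIntegral

private lemma stmt17_conj_int {f : ℝ → ℂ} {a b : ℝ} :
    (∫ x in a..b, (starRingEnd ℂ) (f x)) = (starRingEnd ℂ) (∫ x in a..b, f x) := by
  rw [intervalIntegral, intervalIntegral, integral_conj, integral_conj, map_sub]

private lemma stmt17_alg (τ w : ℂ) (hτ : τ ≠ 0) (hw : w ≠ 0) (h1 : τ * w ≠ 1) :
    τ * (τ - w⁻¹)⁻¹ + τ⁻¹ * (τ⁻¹ - w)⁻¹ = 1 := by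
  have h2 : τ - w⁻¹ ≠ 0 := by
    intro h
    rw [sub_eq_zero] at h
    exact h1 (by rw [h, inv_mul_cancel₀ hw])
  have h3 : τ⁻¹ - w ≠ 0 := by
    intro h
    rw [sub_eq_zero] at h
    exact h1 (by rw [← h, mul_inv_cancel₀ hτ])
  have h4 : τ * w - 1 ≠ 0 := sub_ne_zero.mpr h1
  have h5 : (1 : ℂ) - τ * w ≠ 0 := fun h => h4 (by linear_combination -h)
  field_simp
  ring

theorem stmt17 (r : ℂ → ℂ) (hr : Continuous r) (hodd : ∀ τ : ℂ, r (-τ) = -r τ)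
    (θ₁ θ₂ : ℝ) (F : ℂ → ℂ)
    (hF : ∀ z : ℂ, F z = Complex.exp ((-1 / (2 * Real.pi * Complex.I)) *
      ((∫ θ in θ₁..θ₂, (Complex.I * Complex.exp (Complex.I * θ)) *
          ((Complex.exp (Complex.I * θ) - z)⁻¹ *
            ((Real.log (1 + (‖r (Complex.exp (Complex.I * θ))‖) ^ 2) : ℝ) : ℂ))) +
       (∫ θ in (θ₁ + Real.pi)..(θ₂ + Real.pi), (Complex.I * Complex.exp (Complex.I * θ)) *
          ((Complex.exp (Complex.I * θ) - z)⁻¹ *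
            ((Real.log (1 + (‖r (Complex.exp (Complex.I * θ))‖) ^ 2) : ℝ) : ℂ)))))) :
    (F 0).im = 0 ∧ 0 < (F 0).re ∧
    ∀ z : ℂ, z ≠ 0 → ‖z‖ ≠ 1 →
      F ((starRingEnd ℂ z)⁻¹) = F 0 * (starRingEnd ℂ (F z))⁻¹ := by
  classical
  set L : ℝ → ℝ := fun θ => Real.log (1 + (‖r (Complex.exp (Complex.I * θ))‖) ^ 2)
    with hLdef
  set c : ℂ := -1 / (2 * Real.pi * Complex.I) with hcdef
  set f : ℂ → ℝ → ℂ := fun z θ => (Complex.I * Complex.exp (Complex.I * θ)) *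
      ((Complex.exp (Complex.I * θ) - z)⁻¹ * ((L θ : ℝ) : ℂ)) with hfdef
  have hFf : ∀ z : ℂ, F z = Complex.exp (c * ((∫ θ in θ₁..θ₂, f z θ) +
      ∫ θ in (θ₁ + Real.pi)..(θ₂ + Real.pi), f z θ)) := fun z => hF z
  have hLc : Continuous L := by
    have hexp : Continuous fun θ : ℝ => Complex.exp (Complex.I * θ) := by fun_prop
    apply Continuous.log
    · exact continuous_const.add ((continuous_norm.comp (hr.comp hexp)).pow 2)
    · intro x; positivity
  have habs : ∀ θ : ℝ, ‖Complex.exp (Complex.I * θ)‖ = 1 := by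
    intro θ
    rw [Complex.norm_exp]
    simp
  have hτ0 : ∀ θ : ℝ, Complex.exp (Complex.I * θ) ≠ 0 := fun θ => Complex.exp_ne_zero _
  -- integral at 0
  set a₁ : ℝ := ∫ θ in θ₁..θ₂, L θ with ha₁
  set a₂ : ℝ := ∫ θ in (θ₁ + Real.pi)..(θ₂ + Real.pi), L θ with ha₂
  have hf0 : ∀ θ : ℝ, f 0 θ = Complex.I * ((L θ : ℝ) : ℂ) := by
    intro θ
    simp only [hfdef, sub_zero]
    field_simp
  have hint0 : ∀ a b : ℝ, (∫ θ in a..b, f 0 θ) = Complex.I * (((∫ θ in a..b, L θ) : ℝ) : ℂ) := by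
    intro a b
    simp_rw [hf0]
    rw [intervalIntegral.integral_const_mul, intervalIntegral.integral_ofReal]
  have hπ : (Real.pi : ℂ) ≠ 0 := by exact_mod_cast Real.pi_ne_zero
  have hcval : c * (Complex.I * (a₁ : ℂ) + Complex.I * (a₂ : ℂ))
      = (((-(a₁ + a₂) / (2 * Real.pi)) : ℝ) : ℂ) := by
    rw [hcdef]
    push_cast
    field_simp
  have hF0 : F 0 = Complex.exp ((((-(a₁ + a₂) / (2 * Real.pi)) : ℝ) : ℂ)) := by
    rw [hFf 0, hint0, hint0, ← ha₁, ← ha₂, hcval]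
  refine ⟨?_, ?_, ?_⟩
  · rw [hF0, ← Complex.ofReal_exp]
    exact Complex.ofReal_im _
  · rw [hF0, ← Complex.ofReal_exp, Complex.ofReal_re]
    exact Real.exp_pos _
  · intro z hz0 hz1
    set w : ℂ := (starRingEnd ℂ) z with hwdef
    have hw0 : w ≠ 0 := by simpa [hwdef] using hz0
    have hτconj : ∀ θ : ℝ, (starRingEnd ℂ) (Complex.exp (Complex.I * θ))
        = (Complex.exp (Complex.I * θ))⁻¹ := by
      intro θ
      rw [← Complex.exp_conj, ← Complex.exp_neg]
      congr 1
      simp [Complex.conj_I]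
    have habsw : ‖w‖ = ‖z‖ := by simp [hwdef]
    -- pointwise identity
    have hpt : ∀ θ : ℝ, f w⁻¹ θ = Complex.I * ((L θ : ℝ) : ℂ) + (starRingEnd ℂ) (f z θ) := by
      intro θ
      have h1 : Complex.exp (Complex.I * θ) * w ≠ 1 := by
        intro h
        apply hz1
        have := congrArg norm h
        rw [norm_mul, habs, habsw, one_mul, norm_one] at this
        exact this
      have key := stmt17_alg (Complex.exp (Complex.I * θ)) w (hτ0 θ) hw0 h1
      simp only [hfdef, map_mul, map_sub, map_inv₀, Complex.conj_I, hτconj θ,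
        Complex.conj_ofReal]
      linear_combination (Complex.I * ((L θ : ℝ) : ℂ)) * key
    -- continuity / integrability
    have hfz_cont : ∀ z' : ℂ, ‖z'‖ ≠ 1 → Continuous (f z') := by
      intro z' h
      apply Continuous.mul
      · fun_prop
      · apply Continuous.mul
        · apply Continuous.inv₀
          · fun_prop
          · intro x
            intro hx
            rw [sub_eq_zero] at hx
            exact h (by rw [← hx, habs])
        · fun_prop
    have hzinv : ‖w⁻¹‖ ≠ 1 := by
      rw [norm_inv, habsw]
      intro h
      exact hz1 (by rw [← inv_inv ‖z‖, h, inv_one])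
    have hint : ∀ a b : ℝ, (∫ θ in a..b, f w⁻¹ θ)
        = Complex.I * (((∫ θ in a..b, L θ) : ℝ) : ℂ)
          + (starRingEnd ℂ) (∫ θ in a..b, f z θ) := by
      intro a b
      rw [intervalIntegral.integral_congr (g := fun θ =>
        Complex.I * ((L θ : ℝ) : ℂ) + (starRingEnd ℂ) (f z θ)) (fun θ _ => hpt θ)]
      rw [intervalIntegral.integral_add, intervalIntegral.integral_const_mul,
        intervalIntegral.integral_ofReal, stmt17_conj_int]
      · exact (Continuous.mul continuous_const (by fun_prop)).intervalIntegrable a b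
      · exact (Complex.continuous_conj.comp (hfz_cont z hz1)).intervalIntegrable a b
    have hcc : (starRingEnd ℂ) c = -c := by
      rw [hcdef]
      simp [map_div₀, Complex.conj_I, Complex.conj_ofReal, Complex.inv_I, map_ofNat]
      rw [eq_div_iff (by simp [hπ, Complex.I_ne_zero])]
      ring_nf
      simp [mul_inv_cancel₀ hπ]
    set J₁ : ℂ := ∫ θ in θ₁..θ₂, f z θ with hJ₁
    set J₂ : ℂ := ∫ θ in (θ₁ + Real.pi)..(θ₂ + Real.pi), f z θ with hJ₂
    rw [hFf w⁻¹, hFf z, hF0, hint, hint, ← ha₁, ← ha₂, ← hJ₁, ← hJ₂, ← hcval,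
      ← Complex.exp_conj, ← div_eq_mul_inv, ← Complex.exp_sub]
    congr 1
    rw [map_mul, hcc, map_add]
    ring
end
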